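/- Let s ∈ (3/2,2), 0 < ε < s − 1, and let γ : ℝ → ℝⁿ be a 1-periodic C¹ curve parametrized by arclength, injective on [0,1), and bi-Lipschitz with constant C ≥ 1. Let h, k : ℝ → ℝⁿ be 1-periodic C¹ maps. Then | ∫₀¹ ∫_{−1/2}^{1/2} ⟨Ω^{s+ε}_γ γ(x,w), Ω^{s−ε}_γ k(x,w)⟩ · ⟨Δ_w γ(x), Δ_w h(x)⟩ / |Δ_w γ(x)|² dμ_γ | ≤ C ‖h'‖_∞ · ( ∫₀¹∫_{−1/2}^{1/2} |Ω^{s+ε}_γ γ|² dμ_γ )^{1/2} · ( ∫₀¹∫_{−1/2}^{1/2} |Ω^{s−ε}_γ k|² dμ_γ )^{1/2} (an inequality in [0,∞]). -/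

import Mathlib

open MeasureTheory
open scoped RealInnerProductSpace ENNReal

noncomputable section

/-- Differentiation with respect to arclength: `D_γ h = h'/|γ'|`
(expressed via the given derivative functions). -/
def Dg {n : ℕ} (γ' h' : ℝ → EuclideanSpace ℝ (Fin n)) (x : ℝ) :
    EuclideanSpace ℝ (Fin n) :=
  ‖γ' x‖⁻¹ • h' x

/-- `L_γ h(x,w) = Δ_w h(x) − D_γ h(x) ⟨D_γ γ(x), Δ_w γ(x)⟩`. -/
def Lg {n : ℕ} (γ γ' h h' : ℝ → EuclideanSpace ℝ (Fin n)) (x w : ℝ) :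
    EuclideanSpace ℝ (Fin n) :=
  (h (x + w) - h x) - ⟪Dg γ' γ' x, γ (x + w) - γ x⟫ • Dg γ' h' x

/-- `Ω^σ_γ h(x,w) = L_γ h(x,w)/|Δ_w γ(x)|^σ`. -/
def Om {n : ℕ} (σ : ℝ) (γ γ' h h' : ℝ → EuclideanSpace ℝ (Fin n)) (x w : ℝ) :
    EuclideanSpace ℝ (Fin n) :=
  (‖γ (x + w) - γ x‖ ^ σ)⁻¹ • Lg γ γ' h h' x w

/-- The density of the measure `dμ_γ = |γ'(x)||γ'(x+w)|/|Δ_w γ(x)| dw dx`. -/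
def dens {n : ℕ} (γ γ' : ℝ → EuclideanSpace ℝ (Fin n)) (x w : ℝ) : ℝ :=
  ‖γ' x‖ * ‖γ' (x + w)‖ / ‖γ (x + w) - γ x‖

/-- The tangent-point energy `TP(γ) = ∬ |Ω^s_γ γ|² dμ_γ`, as an element of `[0,∞]`. -/
def TPe {n : ℕ} (s : ℝ) (γ γ' : ℝ → EuclideanSpace ℝ (Fin n)) : ℝ≥0∞ :=
  ∫⁻ x in Set.Icc (0:ℝ) 1, ∫⁻ w in Set.Ioo (-(1:ℝ)/2) (1/2),
    ENNReal.ofReal (‖Om s γ γ' γ γ' x w‖ ^ 2 * dens γ γ' x w)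

end

/-- Auxiliary: measurability of the uncurried `Om`. -/
lemma Om_meas {n : ℕ} (σ : ℝ) (hσ : 0 ≤ σ) (γ γ' f f' : ℝ → EuclideanSpace ℝ (Fin n))
    (hγcont : Continuous γ) (hγc : Continuous γ') (harc : ∀ x, ‖γ' x‖ = 1)
    (hfcont : Continuous f) (hfc : Continuous f') :
    Measurable (fun p : ℝ × ℝ => Om σ γ γ' f f' p.1 p.2) := by
  have hDg : ∀ (g : ℝ → EuclideanSpace ℝ (Fin n)) (x : ℝ), Dg γ' g x = g x := by
    intro g x; simp [Dg, harc]
  have hΔ : Continuous (fun p : ℝ × ℝ => γ (p.1 + p.2) - γ p.1) :=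
    (hγcont.comp (continuous_fst.add continuous_snd)).sub (hγcont.comp continuous_fst)
  have hLg : Continuous (fun p : ℝ × ℝ => Lg γ γ' f f' p.1 p.2) := by
    simp only [Lg, hDg]
    exact ((hfcont.comp (continuous_fst.add continuous_snd)).sub
      (hfcont.comp continuous_fst)).sub
      (((hγc.comp continuous_fst).inner (𝕜 := ℝ) hΔ).smul (hfc.comp continuous_fst))
  have hn : Measurable (fun p : ℝ × ℝ => (‖γ (p.1 + p.2) - γ p.1‖ ^ σ)⁻¹) :=
    ((hΔ.norm.rpow_const (fun x => Or.inr hσ)).measurable).inv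
  exact hn.smul hLg.measurable

/-- Weight-shifted Cauchy–Schwarz estimate (in `[0,∞]`):
`∬ |⟨Ω^{s+ε}_γ γ, Ω^{s−ε}_γ k⟩ ⟨Δ_w γ, Δ_w h⟩/|Δ_w γ|²| dμ_γ
  ≤ C ‖h'‖_∞ (∬ |Ω^{s+ε}_γ γ|² dμ_γ)^{1/2} (∬ |Ω^{s−ε}_γ k|² dμ_γ)^{1/2}`. -/
theorem stmt4 {n : ℕ} (hn : 2 ≤ n) (s ε : ℝ) (hs : s ∈ Set.Ioo (3/2 : ℝ) 2)
    (hε : 0 < ε ∧ ε < s - 1)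
    (C : ℝ) (hC : 1 ≤ C)
    (γ γ' h h' k k' : ℝ → EuclideanSpace ℝ (Fin n))
    (hγd : ∀ x, HasDerivAt γ (γ' x) x) (hγc : Continuous γ')
    (hγper : ∀ x, γ (x + 1) = γ x)
    (harc : ∀ x, ‖γ' x‖ = 1)
    (hinj : Set.InjOn γ (Set.Ico (0:ℝ) 1))
    (hbil : ∀ x w : ℝ, |w| ≤ 1/2 → |w| / C ≤ ‖γ (x + w) - γ x‖)
    (hhd : ∀ x, HasDerivAt h (h' x) x) (hhc : Continuous h')
    (hhper : ∀ x, h (x + 1) = h x)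
    (hkd : ∀ x, HasDerivAt k (k' x) x) (hkc : Continuous k')
    (hkper : ∀ x, k (x + 1) = k x) :
    (∫⁻ x in Set.Icc (0:ℝ) 1, ∫⁻ w in Set.Ioo (-(1:ℝ)/2) (1/2),
        ENNReal.ofReal
          (|⟪Om (s + ε) γ γ' γ γ' x w, Om (s - ε) γ γ' k k' x w⟫ *
              (⟪γ (x + w) - γ x, h (x + w) - h x⟫ / ‖γ (x + w) - γ x‖ ^ 2)| *
            dens γ γ' x w))
      ≤ ENNReal.ofReal (C * (⨆ x : ℝ, ‖h' x‖)) *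
        (∫⁻ x in Set.Icc (0:ℝ) 1, ∫⁻ w in Set.Ioo (-(1:ℝ)/2) (1/2),
          ENNReal.ofReal (‖Om (s + ε) γ γ' γ γ' x w‖ ^ 2 * dens γ γ' x w)) ^ ((1:ℝ)/2) *
        (∫⁻ x in Set.Icc (0:ℝ) 1, ∫⁻ w in Set.Ioo (-(1:ℝ)/2) (1/2),
          ENNReal.ofReal (‖Om (s - ε) γ γ' k k' x w‖ ^ 2 * dens γ γ' x w)) ^ ((1:ℝ)/2) := by
  obtain ⟨hε0, hε1⟩ := hε
  obtain ⟨hs1, hs2⟩ := hs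
  have hσ1 : 0 ≤ s + ε := by linarith
  have hσ2 : 0 ≤ s - ε := by linarith
  have hC0 : (0:ℝ) < C := lt_of_lt_of_le one_pos hC
  have hγcont : Continuous γ :=
    continuous_iff_continuousAt.mpr fun x => (hγd x).continuousAt
  have hhcont : Continuous h :=
    continuous_iff_continuousAt.mpr fun x => (hhd x).continuousAt
  have hkcont : Continuous k :=
    continuous_iff_continuousAt.mpr fun x => (hkd x).continuousAt
  -- periodicity of h'
  have hh'per : Function.Periodic h' 1 := by
    intro x
    have h1 : HasDerivAt (fun y => h (y + 1)) (h' (x + 1)) x :=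
      (hhd (x + 1)).comp_add_const x 1
    have h2 : (fun y : ℝ => h (y + 1)) = h := funext hhper
    rw [h2] at h1
    exact h1.unique (hhd x)
  set M : ℝ := ⨆ x : ℝ, ‖h' x‖ with hMdef
  have hbdd : BddAbove (Set.range fun x => ‖h' x‖) := by
    obtain ⟨B, hB⟩ := ((isCompact_Icc (a := (0:ℝ)) (b := 1)).image hhc.norm).bddAbove
    refine ⟨B, ?_⟩
    rintro y ⟨x, rfl⟩
    have hx : h' (Int.fract x) = h' x := by
      have := hh'per.sub_int_mul_eq (x := x) (n := ⌊x⌋)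
      rwa [mul_one, Int.self_sub_floor] at this
    show ‖h' x‖ ≤ B
    rw [← hx]
    exact hB ⟨Int.fract x, ⟨Int.fract_nonneg x, (Int.fract_lt_one x).le⟩, rfl⟩
  have hMle : ∀ x, ‖h' x‖ ≤ M := fun x => le_ciSup hbdd x
  have hM0 : 0 ≤ M := le_trans (norm_nonneg _) (hMle 0)
  -- measurability
  have hOm1 : Measurable (fun p : ℝ × ℝ => Om (s + ε) γ γ' γ γ' p.1 p.2) :=
    Om_meas _ hσ1 _ _ _ _ hγcont hγc harc hγcont hγc
  have hOm2 : Measurable (fun p : ℝ × ℝ => Om (s - ε) γ γ' k k' p.1 p.2) :=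
    Om_meas _ hσ2 _ _ _ _ hγcont hγc harc hkcont hkc
  have hΔγ : Continuous (fun p : ℝ × ℝ => γ (p.1 + p.2) - γ p.1) :=
    (hγcont.comp (continuous_fst.add continuous_snd)).sub (hγcont.comp continuous_fst)
  have hΔh : Continuous (fun p : ℝ × ℝ => h (p.1 + p.2) - h p.1) :=
    (hhcont.comp (continuous_fst.add continuous_snd)).sub (hhcont.comp continuous_fst)
  have hdens : Measurable (fun p : ℝ × ℝ => dens γ γ' p.1 p.2) := by
    unfold dens
    exact (((hγc.comp continuous_fst).norm.mul
      (hγc.comp (continuous_fst.add continuous_snd)).norm).measurable).div hΔγ.norm.measurable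
  have hF : Measurable (fun p : ℝ × ℝ =>
      ENNReal.ofReal (‖Om (s + ε) γ γ' γ γ' p.1 p.2‖ ^ 2 * dens γ γ' p.1 p.2)) :=
    ENNReal.measurable_ofReal.comp ((hOm1.norm.pow_const 2).mul hdens)
  have hG : Measurable (fun p : ℝ × ℝ =>
      ENNReal.ofReal (‖Om (s - ε) γ γ' k k' p.1 p.2‖ ^ 2 * dens γ γ' p.1 p.2)) :=
    ENNReal.measurable_ofReal.comp ((hOm2.norm.pow_const 2).mul hdens)
  have hΦ : Measurable (fun p : ℝ × ℝ =>
      ENNReal.ofReal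
        (|⟪Om (s + ε) γ γ' γ γ' p.1 p.2, Om (s - ε) γ γ' k k' p.1 p.2⟫ *
            (⟪γ (p.1 + p.2) - γ p.1, h (p.1 + p.2) - h p.1⟫ / ‖γ (p.1 + p.2) - γ p.1‖ ^ 2)| *
          dens γ γ' p.1 p.2)) := by
    apply ENNReal.measurable_ofReal.comp
    exact (((hOm1.inner hOm2).mul
      (((hΔγ.measurable.inner hΔh.measurable)).div
      (hΔγ.norm.measurable.pow_const 2))).abs).mul hdens
  -- product measure
  set μ := volume.restrict (Set.Icc (0:ℝ) 1) with hμ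
  set ν := volume.restrict (Set.Ioo (-(1:ℝ)/2) (1/2)) with hν
  have e1 : (∫⁻ x in Set.Icc (0:ℝ) 1, ∫⁻ w in Set.Ioo (-(1:ℝ)/2) (1/2),
      ENNReal.ofReal
        (|⟪Om (s + ε) γ γ' γ γ' x w, Om (s - ε) γ γ' k k' x w⟫ *
            (⟪γ (x + w) - γ x, h (x + w) - h x⟫ / ‖γ (x + w) - γ x‖ ^ 2)| *
          dens γ γ' x w))
      = ∫⁻ p : ℝ × ℝ, ENNReal.ofReal
        (|⟪Om (s + ε) γ γ' γ γ' p.1 p.2, Om (s - ε) γ γ' k k' p.1 p.2⟫ *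
            (⟪γ (p.1 + p.2) - γ p.1, h (p.1 + p.2) - h p.1⟫ / ‖γ (p.1 + p.2) - γ p.1‖ ^ 2)| *
          dens γ γ' p.1 p.2) ∂(μ.prod ν) :=
    lintegral_lintegral hΦ.aemeasurable
  have e2 : (∫⁻ x in Set.Icc (0:ℝ) 1, ∫⁻ w in Set.Ioo (-(1:ℝ)/2) (1/2),
      ENNReal.ofReal (‖Om (s + ε) γ γ' γ γ' x w‖ ^ 2 * dens γ γ' x w))
      = ∫⁻ p : ℝ × ℝ, ENNReal.ofReal
        (‖Om (s + ε) γ γ' γ γ' p.1 p.2‖ ^ 2 * dens γ γ' p.1 p.2) ∂(μ.prod ν) :=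
    lintegral_lintegral hF.aemeasurable
  have e3 : (∫⁻ x in Set.Icc (0:ℝ) 1, ∫⁻ w in Set.Ioo (-(1:ℝ)/2) (1/2),
      ENNReal.ofReal (‖Om (s - ε) γ γ' k k' x w‖ ^ 2 * dens γ γ' x w))
      = ∫⁻ p : ℝ × ℝ, ENNReal.ofReal
        (‖Om (s - ε) γ γ' k k' p.1 p.2‖ ^ 2 * dens γ γ' p.1 p.2) ∂(μ.prod ν) :=
    lintegral_lintegral hG.aemeasurable
  rw [e1, e2, e3]
  -- a.e. membership
  have hae : ∀ᵐ p : ℝ × ℝ ∂(μ.prod ν), p.2 ∈ Set.Ioo (-(1:ℝ)/2) (1/2) := by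
    rw [hμ, hν, Measure.prod_restrict]
    filter_upwards [ae_restrict_mem (measurableSet_Icc.prod measurableSet_Ioo)] with p hp
    exact hp.2
  -- pointwise bound
  have point : ∀ p : ℝ × ℝ, p.2 ∈ Set.Ioo (-(1:ℝ)/2) (1/2) →
      ENNReal.ofReal
        (|⟪Om (s + ε) γ γ' γ γ' p.1 p.2, Om (s - ε) γ γ' k k' p.1 p.2⟫ *
            (⟪γ (p.1 + p.2) - γ p.1, h (p.1 + p.2) - h p.1⟫ / ‖γ (p.1 + p.2) - γ p.1‖ ^ 2)| *
          dens γ γ' p.1 p.2)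
      ≤ ENNReal.ofReal (C * M) *
        ((ENNReal.ofReal (‖Om (s + ε) γ γ' γ γ' p.1 p.2‖ ^ 2 * dens γ γ' p.1 p.2)) ^ ((1:ℝ)/2) *
         (ENNReal.ofReal (‖Om (s - ε) γ γ' k k' p.1 p.2‖ ^ 2 * dens γ γ' p.1 p.2)) ^ ((1:ℝ)/2)) := by
    rintro ⟨x, w⟩ hw
    simp only at hw ⊢
    set a := ‖Om (s + ε) γ γ' γ γ' x w‖ with ha
    set b := ‖Om (s - ε) γ γ' k k' x w‖ with hb
    set d := dens γ γ' x w with hd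
    have hd0 : 0 ≤ d := by rw [hd]; unfold dens; positivity
    have ha0 : 0 ≤ a := norm_nonneg _
    have hb0 : 0 ≤ b := norm_nonneg _
    -- the q-estimate
    have hq : |⟪γ (x + w) - γ x, h (x + w) - h x⟫ / ‖γ (x + w) - γ x‖ ^ 2| ≤ C * M := by
      by_cases hw0 : w = 0
      · subst hw0
        simp only [add_zero, sub_self, inner_zero_left, zero_div, abs_zero]
        positivity
      · have hw2 : |w| ≤ 1 / 2 := by
          rw [abs_le]; constructor
          · linarith [hw.1]
          · linarith [hw.2]
        have hbl := hbil x w hw2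
        have hΔpos : 0 < ‖γ (x + w) - γ x‖ :=
          lt_of_lt_of_le (div_pos (abs_pos.mpr hw0) hC0) hbl
        have hwle : |w| ≤ C * ‖γ (x + w) - γ x‖ := by
          rw [div_le_iff₀ hC0] at hbl; linarith [hbl]
        have hΔhb : ‖h (x + w) - h x‖ ≤ M * |w| := by
          have := convex_univ.norm_image_sub_le_of_norm_hasDerivWithin_le
            (f := h) (f' := h') (fun y _ => (hhd y).hasDerivWithinAt)
            (fun y _ => hMle y) (Set.mem_univ x) (Set.mem_univ (x + w))
          simpa [Real.norm_eq_abs] using this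
        rw [abs_div, abs_of_nonneg (by positivity : (0:ℝ) ≤ ‖γ (x + w) - γ x‖ ^ 2),
          div_le_iff₀ (by positivity)]
        calc |⟪γ (x + w) - γ x, h (x + w) - h x⟫|
            ≤ ‖γ (x + w) - γ x‖ * ‖h (x + w) - h x‖ := abs_real_inner_le_norm _ _
          _ ≤ ‖γ (x + w) - γ x‖ * (M * (C * ‖γ (x + w) - γ x‖)) := by
              refine mul_le_mul_of_nonneg_left ?_ (norm_nonneg _)
              exact le_trans hΔhb (mul_le_mul_of_nonneg_left hwle hM0)
          _ = C * M * ‖γ (x + w) - γ x‖ ^ 2 := by ring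
    -- rpow computations
    have hrw : ∀ c : ℝ, 0 ≤ c →
        (ENNReal.ofReal (c ^ 2 * d)) ^ ((1:ℝ)/2) = ENNReal.ofReal (c * Real.sqrt d) := by
      intro c hc
      rw [ENNReal.ofReal_rpow_of_nonneg (by positivity) (by norm_num : (0:ℝ) ≤ 1/2)]
      congr 1
      rw [← Real.sqrt_eq_rpow, Real.sqrt_mul (sq_nonneg c), Real.sqrt_sq hc]
    rw [hrw a ha0, hrw b hb0, ← ENNReal.ofReal_mul (by positivity),
      ← ENNReal.ofReal_mul (by positivity)]
    apply ENNReal.ofReal_le_ofReal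
    have hsq : Real.sqrt d * Real.sqrt d = d := Real.mul_self_sqrt hd0
    have hip : |⟪Om (s + ε) γ γ' γ γ' x w, Om (s - ε) γ γ' k k' x w⟫| ≤ a * b :=
      abs_real_inner_le_norm _ _
    calc |⟪Om (s + ε) γ γ' γ γ' x w, Om (s - ε) γ γ' k k' x w⟫ *
          (⟪γ (x + w) - γ x, h (x + w) - h x⟫ / ‖γ (x + w) - γ x‖ ^ 2)| * d
        = |⟪Om (s + ε) γ γ' γ γ' x w, Om (s - ε) γ γ' k k' x w⟫| *
          |⟪γ (x + w) - γ x, h (x + w) - h x⟫ / ‖γ (x + w) - γ x‖ ^ 2| * d := by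
          rw [abs_mul]
      _ ≤ (a * b) * (C * M) * d := by
          refine mul_le_mul_of_nonneg_right ?_ hd0
          exact mul_le_mul hip hq (abs_nonneg _) (by positivity)
      _ = C * M * (a * Real.sqrt d * (b * Real.sqrt d)) := by
          rw [mul_mul_mul_comm a (Real.sqrt d) b (Real.sqrt d), hsq]; ring
  -- put things together
  calc (∫⁻ p : ℝ × ℝ, ENNReal.ofReal
        (|⟪Om (s + ε) γ γ' γ γ' p.1 p.2, Om (s - ε) γ γ' k k' p.1 p.2⟫ *
            (⟪γ (p.1 + p.2) - γ p.1, h (p.1 + p.2) - h p.1⟫ / ‖γ (p.1 + p.2) - γ p.1‖ ^ 2)| *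
          dens γ γ' p.1 p.2) ∂(μ.prod ν))
      ≤ ∫⁻ p : ℝ × ℝ, ENNReal.ofReal (C * M) *
          ((ENNReal.ofReal (‖Om (s + ε) γ γ' γ γ' p.1 p.2‖ ^ 2 * dens γ γ' p.1 p.2)) ^ ((1:ℝ)/2) *
           (ENNReal.ofReal (‖Om (s - ε) γ γ' k k' p.1 p.2‖ ^ 2 * dens γ γ' p.1 p.2)) ^ ((1:ℝ)/2))
          ∂(μ.prod ν) := by
        refine lintegral_mono_ae ?_
        filter_upwards [hae] with p hp using point p hp
    _ = ENNReal.ofReal (C * M) *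
        ∫⁻ p : ℝ × ℝ,
          ((ENNReal.ofReal (‖Om (s + ε) γ γ' γ γ' p.1 p.2‖ ^ 2 * dens γ γ' p.1 p.2)) ^ ((1:ℝ)/2) *
           (ENNReal.ofReal (‖Om (s - ε) γ γ' k k' p.1 p.2‖ ^ 2 * dens γ γ' p.1 p.2)) ^ ((1:ℝ)/2))
          ∂(μ.prod ν) :=
        lintegral_const_mul' _ _ ENNReal.ofReal_ne_top
    _ ≤ ENNReal.ofReal (C * M) *
        ((∫⁻ p : ℝ × ℝ, ENNReal.ofReal
            (‖Om (s + ε) γ γ' γ γ' p.1 p.2‖ ^ 2 * dens γ γ' p.1 p.2) ∂(μ.prod ν)) ^ ((1:ℝ)/2) *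
         (∫⁻ p : ℝ × ℝ, ENNReal.ofReal
            (‖Om (s - ε) γ γ' k k' p.1 p.2‖ ^ 2 * dens γ γ' p.1 p.2) ∂(μ.prod ν)) ^ ((1:ℝ)/2)) := by
        refine mul_le_mul_right ?_ _
        have hconj : Real.HolderConjugate 2 2 := Real.HolderConjugate.two_two
        have := ENNReal.lintegral_mul_le_Lp_mul_Lq (μ.prod ν) hconj
          (f := fun p : ℝ × ℝ =>
            (ENNReal.ofReal (‖Om (s + ε) γ γ' γ γ' p.1 p.2‖ ^ 2 * dens γ γ' p.1 p.2)) ^ ((1:ℝ)/2))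
          (g := fun p : ℝ × ℝ =>
            (ENNReal.ofReal (‖Om (s - ε) γ γ' k k' p.1 p.2‖ ^ 2 * dens γ γ' p.1 p.2)) ^ ((1:ℝ)/2))
          (hF.pow_const _).aemeasurable (hG.pow_const _).aemeasurable
        simp only [Pi.mul_apply, ← ENNReal.rpow_natCast, ← ENNReal.rpow_mul] at this ⊢
        norm_num at this
        simpa using this
    _ = _ := by rw [mul_assoc]
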